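/- Let p be a prime and let R be a commutative topological ring such that the subgroups p^n R (n ∈ ℕ) form a neighbourhood basis of 0 and such that the canonical map R → lim_n R/p^n R is bijective (R is p-adically complete and separated). Let I be a set and let c₀(I,R) := { a : I → R : a tends to zero }, an R-submodule of ∏_{i∈I} R; equip c₀(I,R) with the topology for which the subgroups { a ∈ c₀(I,R) : a_i ∈ p^n R for all i ∈ I } (n ∈ ℕ) form a neighbourhood basis of 0. Then for every b ∈ ∏_{i∈I} R and every x ∈ c₀(I,R) the family (b_i · x_i)_{i∈I} is summable in R, and the map ∏_{i∈I} R → Hom_R(c₀(I,R), R) sending b to the functional x ↦ Σ_{i∈I} b_i x_i is a bijection onto the set of R-linear maps c₀(I,R) → R that are continuous for the above topology on c₀(I,R) and the p-adic topology on R. -/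

import Mathlib

open Filter

namespace Stmt9

/-- The `R`-module `c₀(I, R)` of families `I → R` tending to zero `p`-adically: the
`p`-adic completion of the direct sum `⊕_I R`, inside `∏_I R`. -/
def c0 (p : ℕ) (R : Type*) [CommRing R] (I : Type*) : Submodule R (I → R) where
  carrier := {a : I → R | ∀ n : ℕ, {i : I | ¬ (p : R) ^ n ∣ a i}.Finite}
  zero_mem' := by
    intro n
    refine Set.Finite.subset Set.finite_empty ?_
    intro i hi
    simp only [Set.mem_setOf_eq, Pi.zero_apply] at hi
    exact absurd (dvd_zero _) hi
  add_mem' := by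
    intro a b ha hb
    simp only [Set.mem_setOf_eq] at ha hb ⊢
    intro n
    refine ((ha n).union (hb n)).subset ?_
    intro i hi
    simp only [Set.mem_setOf_eq, Pi.add_apply] at hi
    by_contra hc
    simp only [Set.mem_union, Set.mem_setOf_eq, not_or, not_not] at hc
    exact hi (dvd_add hc.1 hc.2)
  smul_mem' := by
    intro r a ha
    simp only [Set.mem_setOf_eq] at ha ⊢
    intro n
    refine (ha n).subset ?_
    intro i hi
    simp only [Set.mem_setOf_eq, Pi.smul_apply, smul_eq_mul] at hi
    simp only [Set.mem_setOf_eq]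
    intro hdvd
    exact hi (hdvd.mul_left r)

section Aux

variable {p : ℕ} {R : Type*} [CommRing R] [TopologicalSpace R] [IsTopologicalRing R]
  {I : Type*}

omit [TopologicalSpace R] [IsTopologicalRing R] in
lemma mem_smul_top_iff (n : ℕ) (y : R) :
    y ∈ (Ideal.span {(p : R)} ^ n • ⊤ : Submodule R R) ↔ (p : R) ^ n ∣ y := by
  rw [smul_eq_mul, Ideal.mul_top, Ideal.span_singleton_pow, Ideal.mem_span_singleton]

/-- single element of c0 -/
def sing (p : ℕ) (R : Type*) [CommRing R] (I : Type*) [DecidableEq I] (i : I) (r : R) :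
    c0 p R I :=
  ⟨Pi.single i r, by
    intro n
    refine (Set.finite_singleton i).subset ?_
    intro j hj
    simp only [Set.mem_setOf_eq] at hj
    by_contra hji
    simp only [Set.mem_singleton_iff] at hji
    rw [Pi.single_apply, if_neg hji] at hj
    exact hj (dvd_zero _)⟩

lemma key (hbasis : (nhds (0 : R)).HasBasis (fun _ : ℕ => True)
      (fun n => {x : R | (p : R) ^ n ∣ x}))
    (hcomplete : IsAdicComplete (Ideal.span {(p : R)}) R)
    (f : I → R) (hf : ∀ n : ℕ, {i : I | ¬ (p : R) ^ n ∣ f i}.Finite) :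
    ∃ L : R, HasSum f L ∧ ∀ (n : ℕ) (T : Finset I),
      (∀ i ∉ T, (p : R) ^ n ∣ f i) → (p : R) ^ n ∣ L - ∑ i ∈ T, f i := by
  classical
  set S : ℕ → Finset I := fun n => (hf n).toFinset with hS
  have hSmono : ∀ {m n : ℕ}, m ≤ n → S m ⊆ S n := by
    intro m n hmn i hi
    simp only [hS, Set.Finite.mem_toFinset, Set.mem_setOf_eq] at hi ⊢
    exact fun h => hi ((pow_dvd_pow _ hmn).trans h)
  set P : ℕ → R := fun n => ∑ i ∈ S n, f i with hP
  have hcompat : ∀ {m n : ℕ}, m ≤ n → P m ≡ P n [SMOD (Ideal.span {(p : R)} ^ m • ⊤ : Submodule R R)] := by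
    intro m n hmn
    rw [SModEq.sub_mem, mem_smul_top_iff]
    have : P n - P m = ∑ i ∈ S n \ S m, f i := by
      rw [Finset.sum_sdiff_eq_sub (hSmono hmn)]
    rw [← dvd_neg, neg_sub, this]
    refine Finset.dvd_sum ?_
    intro i hi
    have : i ∉ S m := (Finset.mem_sdiff.mp hi).2
    simp only [hS, Set.Finite.mem_toFinset, Set.mem_setOf_eq, not_not] at this
    exact this
  obtain ⟨L, hL⟩ := hcomplete.toIsPrecomplete.prec' P (fun {m n} h => hcompat h)
  have hLprop : ∀ (n : ℕ) (T : Finset I),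
      (∀ i ∉ T, (p : R) ^ n ∣ f i) → (p : R) ^ n ∣ L - ∑ i ∈ T, f i := by
    intro n T hT
    have hsub : S n ⊆ T := by
      intro i hi
      by_contra hc
      have := hT i hc
      simp only [hS, Set.Finite.mem_toFinset, Set.mem_setOf_eq] at hi
      exact hi this
    have h1 : (p : R) ^ n ∣ P n - L := by
      have := hL n
      rw [SModEq.sub_mem, mem_smul_top_iff] at this
      exact this
    have h2 : (p : R) ^ n ∣ ∑ i ∈ T, f i - P n := by
      rw [← Finset.sum_sdiff_eq_sub hsub]
      refine Finset.dvd_sum ?_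
      intro i hi
      have : i ∉ S n := (Finset.mem_sdiff.mp hi).2
      simp only [hS, Set.Finite.mem_toFinset, Set.mem_setOf_eq, not_not] at this
      exact this
    have h3 := dvd_add h2 h1
    rw [sub_add_sub_cancel] at h3
    have h4 := dvd_neg.mpr h3
    rw [neg_sub] at h4
    exact h4
  refine ⟨L, ?_, hLprop⟩
  rw [HasSum, ← tendsto_sub_nhds_zero_iff]
  rw [hbasis.tendsto_right_iff]
  intro n _
  rw [SummationFilter.unconditional_filter, eventually_atTop]
  refine ⟨S n, fun T hT => ?_⟩
  have hdvd : (p : R) ^ n ∣ L - ∑ i ∈ T, f i := by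
    refine hLprop n T ?_
    intro i hi
    by_contra hc
    exact hi (hT (by simpa [hS, Set.Finite.mem_toFinset] using hc))
  have h4 := dvd_neg.mpr hdvd
  rw [neg_sub] at h4
  exact h4

end Aux

/-- Let `R` be a `p`-adically complete and separated topological ring whose topology is the
`p`-adic one, and equip `c₀(I,R)` with (the unique group) topology `τ` in which the
subgroups `{a | ∀ i, a_i ∈ p^n R}` form a neighbourhood basis of `0`. Then for every
`b ∈ ∏_I R` and `x ∈ c₀(I,R)` the family `(b_i x_i)` is summable, and `b ↦ (x ↦ Σ_i b_i x_i)`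
is a bijection from `∏_I R` onto the set of `τ`-continuous `R`-linear maps `c₀(I,R) → R`. -/
theorem dual_of_completed_direct_sum
    (p : ℕ) [Fact p.Prime]
    (R : Type*) [CommRing R] [TopologicalSpace R] [IsTopologicalRing R]
    (hbasis : (nhds (0 : R)).HasBasis (fun _ : ℕ => True)
      (fun n => {x : R | (p : R) ^ n ∣ x}))
    (hcomplete : IsAdicComplete (Ideal.span {(p : R)}) R)
    (I : Type*)
    (τ : TopologicalSpace (c0 p R I))
    (hτgroup : @IsTopologicalAddGroup (c0 p R I) τ _)
    (hτbasis : (@nhds _ τ (0 : c0 p R I)).HasBasis (fun _ : ℕ => True)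
      (fun n => {a : c0 p R I | ∀ i : I, (p : R) ^ n ∣ (a : I → R) i})) :
    (∀ (b : I → R) (x : c0 p R I), Summable (fun i : I => b i * (x : I → R) i)) ∧
    Set.BijOn
      (fun (b : I → R) (x : c0 p R I) => ∑' i : I, b i * (x : I → R) i)
      Set.univ
      {g : c0 p R I → R |
        (∀ x y : c0 p R I, g (x + y) = g x + g y) ∧
        (∀ (r : R) (x : c0 p R I), g (r • x) = r * g x) ∧
        @Continuous _ _ τ _ g} := by
  classical
  letI := τ
  haveI := hτgroup
  -- R is Hausdorff
  haveI hT2 : T2Space R := by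
    apply IsTopologicalAddGroup.t2Space_of_zero_sep
    intro x hx
    have : ¬ ∀ n : ℕ, (p : R) ^ n ∣ x := by
      intro h
      apply hx
      refine hcomplete.toIsHausdorff.haus x ?_
      intro n
      rw [SModEq.zero, mem_smul_top_iff]
      exact h n
    push_neg at this
    obtain ⟨n, hn⟩ := this
    exact ⟨{y : R | (p : R) ^ n ∣ y}, hbasis.mem_of_mem trivial, hn⟩
  -- finiteness for the product family
  have hfin : ∀ (b : I → R) (x : c0 p R I) (n : ℕ),
      {i : I | ¬ (p : R) ^ n ∣ b i * (x : I → R) i}.Finite := by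
    intro b x n
    refine (x.2 n).subset ?_
    intro i hi
    simp only [Set.mem_setOf_eq] at hi ⊢
    exact fun h => hi (h.mul_left _)
  have hkey : ∀ (b : I → R) (x : c0 p R I),
      Summable (fun i : I => b i * (x : I → R) i) ∧
      ∀ (n : ℕ) (T : Finset I), (∀ i ∉ T, (p : R) ^ n ∣ b i * (x : I → R) i) →
        (p : R) ^ n ∣ (∑' i : I, b i * (x : I → R) i) - ∑ i ∈ T, b i * (x : I → R) i := by
    intro b x
    obtain ⟨L, hL, hLp⟩ := key hbasis hcomplete _ (hfin b x)
    refine ⟨⟨L, hL⟩, ?_⟩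
    rwa [hL.tsum_eq]
  have hsummable : ∀ (b : I → R) (x : c0 p R I),
      Summable (fun i : I => b i * (x : I → R) i) := fun b x => (hkey b x).1
  refine ⟨hsummable, ?_, ?_, ?_⟩
  · -- MapsTo
    intro b _
    simp only [Set.mem_setOf_eq]
    refine ⟨?_, ?_, ?_⟩
    · intro x y
      have : (fun i : I => b i * ((x + y : c0 p R I) : I → R) i) =
          fun i : I => b i * (x : I → R) i + b i * (y : I → R) i := by
        funext i
        simp [mul_add]
      rw [this]
      exact Summable.tsum_add (hsummable b x) (hsummable b y)
    · intro r x
      have : (fun i : I => b i * ((r • x : c0 p R I) : I → R) i) =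
          fun i : I => r * (b i * (x : I → R) i) := by
        funext i
        simp [Submodule.coe_smul, smul_eq_mul]; ring
      rw [this]
      exact (hsummable b x).tsum_mul_left r
    · -- continuity
      set g : c0 p R I → R := fun x => ∑' i : I, b i * (x : I → R) i with hg
      have hadd : ∀ x y : c0 p R I, g (x + y) = g x + g y := by
        intro x y
        have : (fun i : I => b i * ((x + y : c0 p R I) : I → R) i) =
            fun i : I => b i * (x : I → R) i + b i * (y : I → R) i := by
          funext i; simp [mul_add]
        simp only [hg]
        rw [this]
        exact Summable.tsum_add (hsummable b x) (hsummable b y)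
      set F : c0 p R I →+ R := AddMonoidHom.mk' g hadd with hF
      have : Continuous F := by
        apply continuous_of_continuousAt_zero F
        unfold ContinuousAt
        rw [F.map_zero]
        rw [hτbasis.tendsto_iff hbasis]
        intro m _
        refine ⟨m, trivial, ?_⟩
        intro a ha
        simp only [Set.mem_setOf_eq] at ha ⊢
        have := (hkey b a).2 m ∅ (fun i _ => (ha i).mul_left _)
        simpa [hF, hg] using this
      exact this
  · -- InjOn
    intro b _ b' _ h
    funext i
    have hi := congrFun h (sing p R I i 1)
    simp only at hi
    have heval : ∀ c : I → R, (∑' j : I, c j * ((sing p R I i 1 : c0 p R I) : I → R) j) = c i := by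
      intro c
      have : ∑' j : I, c j * ((sing p R I i 1 : c0 p R I) : I → R) j
          = c i * ((sing p R I i 1 : c0 p R I) : I → R) i := by
        refine tsum_eq_single i ?_
        intro j hj
        simp only [sing, Pi.single_apply, if_neg hj, mul_zero]
      rw [this]
      simp [sing, Pi.single_apply]
    rw [heval b, heval b'] at hi
    exact hi
  · -- SurjOn
    intro g hg
    obtain ⟨hadd, hsmul, hcont⟩ := hg
    set F : c0 p R I →+ R := AddMonoidHom.mk' g hadd with hF
    set b : I → R := fun i => g (sing p R I i 1) with hb
    refine ⟨b, Set.mem_univ _, ?_⟩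
    funext x
    simp only
    -- continuity at zero gives: ∀ m, ∃ n, ...
    have hcont0 : ∀ m : ℕ, ∃ n : ℕ, ∀ a : c0 p R I,
        (∀ i : I, (p : R) ^ n ∣ (a : I → R) i) → (p : R) ^ m ∣ g a := by
      have h0 : g 0 = 0 := F.map_zero
      have ht : Filter.Tendsto g (nhds 0) (nhds 0) := by
        have := hcont.tendsto (0 : c0 p R I)
        rwa [h0] at this
      rw [hτbasis.tendsto_iff hbasis] at ht
      intro m
      obtain ⟨n, _, hn⟩ := ht m trivial
      exact ⟨n, fun a ha => hn a ha⟩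
    -- g of a truncated element
    have hgsing : ∀ (i : I) (r : R), g (sing p R I i r) = r * b i := by
      intro i r
      have : sing p R I i r = r • sing p R I i 1 := by
        apply Subtype.ext
        simp only [sing, Submodule.coe_smul]
        funext j
        simp [Pi.single_apply, mul_ite]
      rw [this, hsmul]
    -- main congruence
    have hcong : ∀ m : ℕ, (p : R) ^ m ∣ g x - ∑' i : I, b i * (x : I → R) i := by
      intro m
      obtain ⟨n, hn⟩ := hcont0 m
      set T : Finset I := (x.2 n).toFinset ∪ (x.2 m).toFinset with hT
      set xT : c0 p R I := ∑ i ∈ T, sing p R I i ((x : I → R) i) with hxT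
      have hxTcoe : ∀ j : I, (xT : I → R) j = if j ∈ T then (x : I → R) j else 0 := by
        intro j
        have h5 : ((xT : c0 p R I) : I → R) j = ∑ i ∈ T, (Pi.single i ((x : I → R) i) : I → R) j := by
          rw [hxT, Submodule.coe_sum]
          simp [sing, Finset.sum_apply]
        rw [h5]
        simp only [Pi.single_apply]
        exact Finset.sum_ite_eq T j (fun i => (x : I → R) i)
      have hdiff : ∀ i : I, (p : R) ^ n ∣ ((x - xT : c0 p R I) : I → R) i := by
        intro i
        have : ((x - xT : c0 p R I) : I → R) i = (x : I → R) i - (xT : I → R) i := rfl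
        rw [this, hxTcoe i]
        by_cases hiT : i ∈ T
        · rw [if_pos hiT, sub_self]
          exact dvd_zero _
        · rw [if_neg hiT, sub_zero]
          have : i ∉ (x.2 n).toFinset := fun h => hiT (Finset.mem_union_left _ h)
          rw [Set.Finite.mem_toFinset, Set.mem_setOf_eq, not_not] at this
          exact this
      have hgdiff : (p : R) ^ m ∣ g (x - xT) := hn _ hdiff
      have hgxT : g xT = ∑ i ∈ T, b i * (x : I → R) i := by
        have : F xT = ∑ i ∈ T, F (sing p R I i ((x : I → R) i)) := by
          rw [hxT]; exact map_sum F _ T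
        have h6 : F xT = g xT := rfl
        rw [h6] at this
        rw [this]
        refine Finset.sum_congr rfl (fun i _ => ?_)
        have : F (sing p R I i ((x : I → R) i)) = g (sing p R I i ((x : I → R) i)) := rfl
        rw [this, hgsing, mul_comm]
      have h1 : (p : R) ^ m ∣ g x - ∑ i ∈ T, b i * (x : I → R) i := by
        have : g (x - xT) = g x - g xT := F.map_sub x xT
        rw [this, hgxT] at hgdiff
        exact hgdiff
      have h2 : (p : R) ^ m ∣ (∑' i : I, b i * (x : I → R) i) - ∑ i ∈ T, b i * (x : I → R) i := by
        refine (hkey b x).2 m T ?_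
        intro i hi
        have : i ∉ (x.2 m).toFinset := fun h => hi (Finset.mem_union_right _ h)
        rw [Set.Finite.mem_toFinset, Set.mem_setOf_eq, not_not] at this
        exact Dvd.dvd.mul_left this _
      have h3 := dvd_sub h1 h2
      rw [sub_sub_sub_cancel_right] at h3
      exact h3
    -- conclude by Hausdorff
    refine (sub_eq_zero.mp ?_).symm
    refine hcomplete.toIsHausdorff.haus _ ?_
    intro m
    rw [SModEq.zero, mem_smul_top_iff]
    exact hcong m


end Stmt9
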